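/- For complex numbers (or complex-valued functions) u, q, w, z with u = q + w + z and |z| ≤ |u|, and any p ≥ 2, one has | |u|^p − |q|^p − |w|^p | ≤ C_p |u|^{p−1} |z| whenever q and w have disjoint supports and |q| + |w| ≤ |u|. -/

import Mathlib

open Function

lemma rpow_sub_rpow_le_aux {a b p : ℝ} (hb : 0 ≤ b) (hba : b ≤ a) (hp : 1 ≤ p) :
    a ^ p - b ^ p ≤ p * a ^ (p - 1) * (a - b) := by
  have ha : 0 ≤ a := hb.trans hba
  rcases eq_or_lt_of_le ha with h0 | h0
  · have hb0 : b = 0 := le_antisymm (hba.trans h0.ge) hb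
    simp [← h0, hb0, Real.zero_rpow (by positivity : p ≠ 0)]
  · set s : ℝ := b / a - 1 with hsdef
    have hs : -1 ≤ s := by
      have : 0 ≤ b / a := div_nonneg hb ha
      simp [hsdef]; linarith
    have hB := one_add_mul_self_le_rpow_one_add hs hp
    have h1s : 1 + s = b / a := by ring
    rw [h1s] at hB
    have hdiv : (b / a) ^ p = b ^ p / a ^ p := Real.div_rpow hb ha p
    rw [hdiv] at hB
    have hap : (0:ℝ) < a ^ p := Real.rpow_pos_of_pos h0 p
    have := mul_le_mul_of_nonneg_left hB hap.le
    rw [mul_div_cancel₀ _ hap.ne'] at this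
    -- this : a ^ p * (1 + p * s) ≤ b ^ p
    have key : a ^ p * (1 + p * s) = a ^ p - p * (a ^ p / a) * (a - b) := by
      field_simp [hsdef]
      linear_combination (p * a) * hsdef + p * (div_mul_cancel₀ b h0.ne')
    rw [key] at this
    have hdiv2 : a ^ p / a = a ^ (p - 1) := by
      rw [eq_comm, Real.rpow_sub h0, Real.rpow_one]
    rw [hdiv2] at this
    linarith

/-- If `u = q + w + z` with `q, w` of disjoint supports, `|q|+|w| ≤ |u|` and `|z| ≤ |u|`
pointwise, then for every `p ≥ 2` there is `C_p` with
`||u|^p − |q|^p − |w|^p| ≤ C_p |u|^{p−1} |z|` pointwise. -/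
theorem power_splitting_estimate (p : ℝ) (hp : 2 ≤ p) :
    ∃ C : ℝ, ∀ u q w z : ℝ → ℂ,
      (∀ x, u x = q x + w x + z x) →
      Disjoint (support q) (support w) →
      (∀ x, ‖q x‖ + ‖w x‖ ≤ ‖u x‖) →
      (∀ x, ‖z x‖ ≤ ‖u x‖) →
      ∀ x : ℝ, |‖u x‖ ^ p - ‖q x‖ ^ p - ‖w x‖ ^ p| ≤ C * ‖u x‖ ^ (p - 1) * ‖z x‖ := by
  refine ⟨p, fun u q w z hu hdisj hqw hz x => ?_⟩
  have hp1 : 1 ≤ p := by linarith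
  -- one of q x, w x is zero
  have hqw0 : q x = 0 ∨ w x = 0 := by
    by_contra h
    push_neg at h
    exact (Set.disjoint_left.mp hdisj h.1) h.2
  -- reduce to: b := norm of the nonzero one among q,w
  obtain ⟨b, hb0, hbz, hbsum⟩ :
      ∃ b : ℝ, 0 ≤ b ∧ |‖u x‖ - b| ≤ ‖z x‖ ∧
        ‖q x‖ ^ p + ‖w x‖ ^ p = b ^ p := by
    have hz0 : p ≠ 0 := by positivity
    rcases hqw0 with h | h
    · refine ⟨‖w x‖, norm_nonneg _, ?_, by simp [h, Real.zero_rpow hz0]⟩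
      have := hu x
      rw [h, zero_add] at this
      have h1 : ‖u x‖ - ‖w x‖ ≤ ‖z x‖ := by
        calc ‖u x‖ - ‖w x‖ ≤ ‖u x - w x‖ := by
              have := norm_sub_norm_le (u x) (w x); linarith
          _ = ‖z x‖ := by rw [this]; ring_nf
      have h2 : ‖w x‖ - ‖u x‖ ≤ ‖z x‖ := by
        have hq := hqw x
        rw [h, norm_zero, zero_add] at hq
        have : 0 ≤ ‖z x‖ := norm_nonneg _
        linarith
      rw [abs_le]; constructor <;> linarith
    · refine ⟨‖q x‖, norm_nonneg _, ?_, by simp [h, Real.zero_rpow hz0]⟩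
      have := hu x
      rw [h, add_zero] at this
      have h1 : ‖u x‖ - ‖q x‖ ≤ ‖z x‖ := by
        calc ‖u x‖ - ‖q x‖ ≤ ‖u x - q x‖ := by
              have := norm_sub_norm_le (u x) (q x); linarith
          _ = ‖z x‖ := by rw [this]; ring_nf
      have h2 : ‖q x‖ - ‖u x‖ ≤ ‖z x‖ := by
        have hq := hqw x
        rw [h, norm_zero, add_zero] at hq
        have : 0 ≤ ‖z x‖ := norm_nonneg _
        linarith
      rw [abs_le]; constructor <;> linarith
  have hbu : b ≤ ‖u x‖ := by
    have hinv : ∀ c : ℝ, 0 ≤ c → b ^ p = c ^ p → b = c := by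
      intro c hc hbc
      have h' := congrArg (fun t => t ^ (1/p)) hbc
      rw [← Real.rpow_mul hb0, ← Real.rpow_mul hc,
        one_div, mul_inv_cancel₀ (by positivity : p ≠ 0), Real.rpow_one, Real.rpow_one] at h'
      exact h'
    rcases hqw0 with h | h
    · have hq := hqw x
      rw [h, norm_zero, zero_add] at hq
      have hb : b ^ p = ‖w x‖ ^ p := by simpa [h, Real.zero_rpow (by positivity : p ≠ 0)] using hbsum.symm
      rw [hinv _ (norm_nonneg _) hb]; exact hq
    · have hq := hqw x
      rw [h, norm_zero, add_zero] at hq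
      have hb : b ^ p = ‖q x‖ ^ p := by simpa [h, Real.zero_rpow (by positivity : p ≠ 0)] using hbsum.symm
      rw [hinv _ (norm_nonneg _) hb]; exact hq
  -- main estimate
  have key : |‖u x‖ ^ p - b ^ p| ≤ p * ‖u x‖ ^ (p - 1) * ‖z x‖ := by
    have h1 : ‖u x‖ ^ p - b ^ p ≤ p * ‖u x‖ ^ (p - 1) * (‖u x‖ - b) :=
      rpow_sub_rpow_le_aux hb0 hbu hp1
    have h2 : 0 ≤ ‖u x‖ ^ p - b ^ p :=
      sub_nonneg.mpr (Real.rpow_le_rpow hb0 hbu (by positivity))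
    rw [abs_of_nonneg h2]
    have hub : ‖u x‖ - b ≤ ‖z x‖ := (le_abs_self _).trans hbz
    have hpos : 0 ≤ p * ‖u x‖ ^ (p - 1) := by positivity
    calc ‖u x‖ ^ p - b ^ p ≤ p * ‖u x‖ ^ (p - 1) * (‖u x‖ - b) := h1
      _ ≤ p * ‖u x‖ ^ (p - 1) * ‖z x‖ := mul_le_mul_of_nonneg_left hub hpos
  calc |‖u x‖ ^ p - ‖q x‖ ^ p - ‖w x‖ ^ p| = |‖u x‖ ^ p - b ^ p| := by
        rw [← hbsum]; ring_nf
    _ ≤ p * ‖u x‖ ^ (p - 1) * ‖z x‖ := key
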